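/- Let p > 3 be a prime and let a be a positive integer. Then for every integer d: (1) if −1 ≤ d ≤ p^a, then in ℤ/pℤ one has ∑_{k=0}^{p^a−1} 4^k·(27^k)⁻¹·binom(3k, k+d) = ((−1)^d·4^{2−d} − 7·(9d+1)·2^d)/81; (2) if p^a ≤ d ≤ 2p^a, then in ℤ/pℤ one has ∑_{k=0}^{p^a−1} 4^k·(27^k)⁻¹·binom(3k, k+d) = ((−1)^d·4^{3−d} − (9d+1)·2^d)/81. Here the powers 4^{2−d}, 4^{3−d}, 2^d are integer powers (zpow) of the invertible elements 4 and 2 of ℤ/pℤ. -/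

import Mathlib

/-- Binomial coefficient with an integer lower index: zero for negative lower index. -/
def ibinom (n : ℕ) (j : ℤ) : ℕ := if 0 ≤ j then n.choose j.toNat else 0

lemma ibinom_succ (n : ℕ) (j : ℤ) : ibinom (n+1) j = ibinom n j + ibinom n (j-1) := by
  unfold ibinom
  rcases lt_trichotomy j 0 with h | h | h
  · rw [if_neg (by omega), if_neg (by omega), if_neg (by omega)]
  · subst h; simp
  · rw [if_pos (by omega), if_pos (by omega), if_pos (by omega)]
    have h1 : j.toNat = (j-1).toNat + 1 := by omega
    rw [h1, Nat.choose_succ_succ, Nat.succ_eq_add_one, ← h1]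
    exact Nat.add_comm _ _

lemma ibinom_add_three (n : ℕ) (j : ℤ) :
    ibinom (n+3) j = ibinom n j + 3 * ibinom n (j-1) + 3 * ibinom n (j-2) + ibinom n (j-3) := by
  have h : n + 3 = n + 1 + 1 + 1 := rfl
  rw [h]
  simp only [ibinom_succ, show j-1-1 = j-2 by ring, show j-1-1-1 = j-3 by ring,
    show j-2-1 = j-3 by ring]
  ring

lemma ibinom_neg {n : ℕ} {j : ℤ} (h : j < 0) : ibinom n j = 0 := if_neg (not_le.2 h)

lemma ibinom_gt {n : ℕ} {j : ℤ} (h : (n : ℤ) < j) : ibinom n j = 0 := by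
  unfold ibinom
  split
  · exact Nat.choose_eq_zero_of_lt (by omega)
  · rfl

lemma lucas3 (p : ℕ) [Fact p.Prime] (a : ℕ) (m : ℕ) :
    (((3 * p ^ a).choose m : ℕ) : ZMod p) =
      if p ^ a ∣ m then ((Nat.choose 3 (m / p ^ a) : ℕ) : ZMod p) else 0 := by
  induction a generalizing m with
  | zero => simp
  | succ a ih =>
    have hp : p.Prime := Fact.out
    have h1 : (((3 * p ^ (a+1)).choose m : ℕ) : ZMod p)
        = (((3 * p ^ (a+1)) % p).choose (m % p) : ZMod p) * (((3 * p ^ (a+1)) / p).choose (m / p) : ZMod p) := by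
      have := (ZMod.natCast_eq_natCast_iff _ _ _).mpr
        (Choose.choose_modEq_choose_mod_mul_choose_div_nat (p := p) (n := 3 * p ^ (a+1)) (k := m))
      push_cast at this
      exact this
    have hdp : p ∣ 3 * p ^ (a+1) := Dvd.dvd.mul_left (dvd_pow_self p (Nat.succ_ne_zero a)) 3
    have hmod : (3 * p ^ (a+1)) % p = 0 := Nat.mod_eq_zero_of_dvd hdp
    have hdiv : (3 * p ^ (a+1)) / p = 3 * p ^ a := by
      rw [pow_succ, ← mul_assoc]
      exact Nat.mul_div_cancel _ hp.pos
    rw [h1, hmod, hdiv, ih]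
    by_cases hpm : p ∣ m
    · have hm0 : m % p = 0 := Nat.mod_eq_zero_of_dvd hpm
      have hiff : p ^ a ∣ m / p ↔ p ^ (a+1) ∣ m := by
        rw [Nat.dvd_div_iff_mul_dvd hpm, pow_succ, mul_comm]
      have hq : m / p / p ^ a = m / p ^ (a+1) := by
        rw [Nat.div_div_eq_div_mul, pow_succ, mul_comm]
      rw [hm0, hq]
      simp [hiff]
    · have hm0 : m % p ≠ 0 := fun h => hpm (Nat.dvd_of_mod_eq_zero h)
      have : Nat.choose 0 (m % p) = 0 := Nat.choose_eq_zero_of_lt (Nat.pos_of_ne_zero hm0)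
      rw [this]
      have : ¬ p ^ (a+1) ∣ m := fun h => hpm ((dvd_pow_self p (Nat.succ_ne_zero a)).trans h)
      simp [this]

noncomputable def Sf (p N : ℕ) (d : ℤ) : ZMod p :=
  ∑ k ∈ Finset.range N, (4 * (27 : ZMod p)⁻¹) ^ k * (ibinom (3 * k) ((k : ℤ) + d) : ZMod p)

noncomputable def F1 (p : ℕ) [Fact p.Prime] (d : ℤ) : ZMod p :=
  ((-1 : ZMod p) ^ d * (4 : ZMod p) ^ (2 - d) -
      7 * ((9 * d + 1 : ℤ) : ZMod p) * (2 : ZMod p) ^ d) * (81 : ZMod p)⁻¹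

noncomputable def F2 (p : ℕ) [Fact p.Prime] (d : ℤ) : ZMod p :=
  ((-1 : ZMod p) ^ d * (4 : ZMod p) ^ (3 - d) -
      ((9 * d + 1 : ℤ) : ZMod p) * (2 : ZMod p) ^ d) * (81 : ZMod p)⁻¹

noncomputable def Rf (p N : ℕ) [Fact p.Prime] (d : ℤ) : ZMod p :=
  if d ≤ (N : ℤ) then F1 p d else if d ≤ 2 * (N : ℤ) then F2 p d else 0

section facts
variable {p : ℕ} [Fact p.Prime]

lemma two_ne (hp3 : 3 < p) : (2 : ZMod p) ≠ 0 := by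
  have := (Fact.out : p.Prime)
  rw [show (2 : ZMod p) = ((2 : ℕ) : ZMod p) by norm_num, Ne, ZMod.natCast_eq_zero_iff]
  intro h
  exact absurd (Nat.le_of_dvd (by norm_num) h) (by omega)

lemma three_ne (hp3 : 3 < p) : (3 : ZMod p) ≠ 0 := by
  have := (Fact.out : p.Prime)
  rw [show (3 : ZMod p) = ((3 : ℕ) : ZMod p) by norm_num, Ne, ZMod.natCast_eq_zero_iff]
  intro h
  exact absurd (Nat.le_of_dvd (by norm_num) h) (by omega)

lemma four_ne (hp3 : 3 < p) : (4 : ZMod p) ≠ 0 := by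
  rw [show (4 : ZMod p) = 2 ^ 2 by norm_num]
  exact pow_ne_zero _ (two_ne hp3)

lemma x27_ne (hp3 : 3 < p) : (27 : ZMod p) ≠ 0 := by
  rw [show (27 : ZMod p) = 3 ^ 3 by norm_num]
  exact pow_ne_zero _ (three_ne hp3)

lemma x81_ne (hp3 : 3 < p) : (81 : ZMod p) ≠ 0 := by
  rw [show (81 : ZMod p) = 3 ^ 4 by norm_num]
  exact pow_ne_zero _ (three_ne hp3)

lemma neg_one_ne : (-1 : ZMod p) ≠ 0 := by
  have : (1 : ZMod p) ≠ 0 := one_ne_zero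
  simpa using this


end facts

section Spart
variable {p : ℕ} [Fact p.Prime]

lemma Sf_zero {N : ℕ} {d : ℤ} (hd : 2 * (N : ℤ) - 1 ≤ d) : Sf p N d = 0 := by
  apply Finset.sum_eq_zero
  intro k hk
  have hk' : (k : ℤ) ≤ (N : ℤ) - 1 := by
    have := Finset.mem_range.mp hk; omega
  have : ((3 * k : ℕ) : ℤ) < (k : ℤ) + d := by push_cast; omega
  rw [ibinom_gt this]
  simp

lemma Sf_last {N : ℕ} (hN1 : 1 ≤ N) (hc : (4 * (27 : ZMod p)⁻¹) ^ N = 4 * (27 : ZMod p)⁻¹)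
    (hcne : (4 * (27 : ZMod p)⁻¹) ≠ 0) :
    Sf p N (2 * (N : ℤ) - 2) = 1 := by
  unfold Sf
  rw [Finset.sum_eq_single_of_mem (N - 1) (Finset.mem_range.mpr (by omega))]
  · have hi : ibinom (3 * (N - 1)) (((N - 1 : ℕ) : ℤ) + (2 * (N : ℤ) - 2)) = 1 := by
      have h1 : ((N - 1 : ℕ) : ℤ) = (N : ℤ) - 1 := by omega
      have h2 : (((N - 1 : ℕ)) : ℤ) + (2 * (N : ℤ) - 2) = ((3 * (N - 1) : ℕ) : ℤ) := by
        push_cast [Nat.mul_sub]; omega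
      rw [h2]
      unfold ibinom
      rw [if_pos (by positivity), Int.toNat_natCast, Nat.choose_self]
    rw [hi]
    have : (4 * (27 : ZMod p)⁻¹) ^ (N - 1) = 1 := by
      have h := hc
      have hrw : N = (N - 1) + 1 := by omega
      rw [hrw, pow_succ] at h
      have := mul_right_cancel₀ hcne (h.trans (one_mul _).symm)
      simpa using this
    rw [this]; simp
  · intro k hk hkne
    have hk' : k < N := Finset.mem_range.mp hk
    have : ((3 * k : ℕ) : ℤ) < (k : ℤ) + (2 * (N : ℤ) - 2) := by
      push_cast
      omega
    rw [ibinom_gt this]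
    simp

lemma Srec {N : ℕ} (hN5 : 5 ≤ N)
    (hc : (4 * (27 : ZMod p)⁻¹) ^ N = 4 * (27 : ZMod p)⁻¹)
    (hcne : (4 * (27 : ZMod p)⁻¹) ≠ 0) (h4 : (4 : ZMod p) ≠ 0) (h27 : (27 : ZMod p) ≠ 0)
    (hLuc : ∀ m : ℕ, (((3 * N).choose m : ℕ) : ZMod p) =
      if N ∣ m then ((Nat.choose 3 (m / N) : ℕ) : ZMod p) else 0)
    (d : ℤ) (hd1 : 1 ≤ d) (hd2 : d ≤ 2 * (N : ℤ) - 1) :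
    Sf p N (d - 2) = 27 * (4 : ZMod p)⁻¹ * Sf p N d + (if d = (N : ℤ) then 3 else 0)
      - Sf p N (d + 1) - 3 * Sf p N d - 3 * Sf p N (d - 1) := by
  set c : ZMod p := 4 * (27 : ZMod p)⁻¹ with hcdef
  set g : ℕ → ZMod p := fun k => c ^ k * (ibinom (3 * k) ((k : ℤ) + d) : ZMod p) with hg
  have hg0 : g 0 = 0 := by
    simp only [hg]
    rw [show (3 * 0 : ℕ) = 0 from rfl, show ((0 : ℕ) : ℤ) + d = d by simp]
    rw [ibinom_gt (by exact_mod_cast hd1 : ((0 : ℕ) : ℤ) < d)]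
    simp
  have hgN : g N = c * (if d = (N : ℤ) then 3 else 0) := by
    simp only [hg]
    have hbi : ibinom (3 * N) ((N : ℤ) + d) = (3 * N).choose ((N : ℤ) + d).toNat := by
      unfold ibinom; rw [if_pos (by omega)]
    rw [hbi, hLuc]
    rw [hc]
    congr 1
    set m := ((N : ℤ) + d).toNat with hm
    have hmv : (m : ℤ) = (N : ℤ) + d := by omega
    by_cases hdN : d = (N : ℤ)
    · have : m = N * 2 := by omega
      rw [this, if_pos ⟨2, rfl⟩, if_pos hdN]
      rw [Nat.mul_div_cancel_left _ (by omega : 0 < N)]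
      norm_num
    · have : ¬ N ∣ m := by
        rintro ⟨q, hq⟩
        have h1 : N < m := by omega
        have h2 : m < 3 * N := by omega
        have hq2 : q = 2 := by
          have ha : 1 < q := Nat.lt_of_mul_lt_mul_left (show N * 1 < N * q by omega)
          have hb : q < 3 := Nat.lt_of_mul_lt_mul_left (show N * q < N * 3 by omega)
          omega
        subst hq2
        exact hdN (by omega)
      rw [if_neg this, if_neg hdN]
  have key : c * (Sf p N (d + 1) + 3 * Sf p N d + 3 * Sf p N (d - 1) + Sf p N (d - 2))
      = Sf p N d + c * (if d = (N : ℤ) then 3 else 0) := by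
    have hstep : ∀ k : ℕ, g (k + 1)
        = c * (c ^ k * (ibinom (3 * k) ((k : ℤ) + (d + 1)) : ZMod p)
            + 3 * (c ^ k * (ibinom (3 * k) ((k : ℤ) + d) : ZMod p))
            + 3 * (c ^ k * (ibinom (3 * k) ((k : ℤ) + (d - 1)) : ZMod p))
            + c ^ k * (ibinom (3 * k) ((k : ℤ) + (d - 2)) : ZMod p)) := by
      intro k
      simp only [hg]
      rw [show 3 * (k + 1) = 3 * k + 3 by ring, ibinom_add_three]
      rw [show ((k + 1 : ℕ) : ℤ) + d = ((k : ℕ) : ℤ) + (d + 1) by push_cast; ring,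
        show ((k : ℕ) : ℤ) + (d + 1) - 1 = ((k : ℕ) : ℤ) + d by ring,
        show ((k : ℕ) : ℤ) + (d + 1) - 2 = ((k : ℕ) : ℤ) + (d - 1) by ring,
        show ((k : ℕ) : ℤ) + (d + 1) - 3 = ((k : ℕ) : ℤ) + (d - 2) by ring]
      push_cast
      ring
    have hsum1 : ∑ k ∈ Finset.range N, g (k + 1) = Sf p N d + g N - g 0 := by
      have := Finset.sum_range_succ' g N
      rw [Finset.sum_range_succ g N] at this
      have hSf : ∑ k ∈ Finset.range N, g k = Sf p N d := rfl
      rw [hSf] at this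
      exact eq_sub_of_add_eq this.symm
    have hsum2 : ∑ k ∈ Finset.range N, g (k + 1)
        = c * (Sf p N (d + 1) + 3 * Sf p N d + 3 * Sf p N (d - 1) + Sf p N (d - 2)) := by
      calc ∑ k ∈ Finset.range N, g (k + 1)
          = ∑ k ∈ Finset.range N,
              (c * ((4 * (27 : ZMod p)⁻¹) ^ k * (ibinom (3 * k) ((k : ℤ) + (d + 1)) : ZMod p))
               + (3 * c) * ((4 * (27 : ZMod p)⁻¹) ^ k * (ibinom (3 * k) ((k : ℤ) + d) : ZMod p))
               + (3 * c) * ((4 * (27 : ZMod p)⁻¹) ^ k * (ibinom (3 * k) ((k : ℤ) + (d - 1)) : ZMod p))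
               + c * ((4 * (27 : ZMod p)⁻¹) ^ k * (ibinom (3 * k) ((k : ℤ) + (d - 2)) : ZMod p))) :=
            Finset.sum_congr rfl fun k _ => by rw [hstep k, ← hcdef]; ring
        _ = c * Sf p N (d + 1) + (3 * c) * Sf p N d + (3 * c) * Sf p N (d - 1)
              + c * Sf p N (d - 2) := by
            simp only [Finset.sum_add_distrib, ← Finset.mul_sum]
            rfl
        _ = c * (Sf p N (d + 1) + 3 * Sf p N d + 3 * Sf p N (d - 1) + Sf p N (d - 2)) := by ring
    rw [← hsum2, hsum1, hg0, hgN]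
    ring
  have hci : c * (27 * (4 : ZMod p)⁻¹) = 1 := by
    rw [hcdef]
    field_simp
  linear_combination (27 * (4 : ZMod p)⁻¹) * key
    - (Sf p N (d + 1) + 3 * Sf p N d + 3 * Sf p N (d - 1) + Sf p N (d - 2)
        - (if d = (N : ℤ) then 3 else 0)) * hci

lemma F1hom (hp3 : 3 < p) (d : ℤ) :
    F1 p (d - 2) = 27 * (4 : ZMod p)⁻¹ * F1 p d - F1 p (d + 1) - 3 * F1 p d - 3 * F1 p (d - 1) := by
  have h1 : (-1 : ZMod p) ≠ 0 := neg_one_ne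
  have h2 : (2 : ZMod p) ≠ 0 := two_ne hp3
  have h4 : (4 : ZMod p) ≠ 0 := four_ne hp3
  have h81 : (81 : ZMod p) ≠ 0 := x81_ne hp3
  simp only [F1]
  rw [show d - 2 = d + (-2) by ring, show d - 1 = d + (-1) by ring,
    show (2 : ℤ) - (d + (-2)) = (2 - d) + 2 by ring,
    show (2 : ℤ) - (d + (-1)) = (2 - d) + 1 by ring,
    show (2 : ℤ) - (d + 1) = (2 - d) + (-1) by ring]
  simp only [zpow_add₀ h1, zpow_add₀ h2, zpow_add₀ h4, zpow_neg, zpow_one, zpow_two,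
    zpow_ofNat]
  push_cast
  field_simp
  ring

lemma F2hom (hp3 : 3 < p) (d : ℤ) :
    F2 p (d - 2) = 27 * (4 : ZMod p)⁻¹ * F2 p d - F2 p (d + 1) - 3 * F2 p d - 3 * F2 p (d - 1) := by
  have h1 : (-1 : ZMod p) ≠ 0 := neg_one_ne
  have h2 : (2 : ZMod p) ≠ 0 := two_ne hp3
  have h4 : (4 : ZMod p) ≠ 0 := four_ne hp3
  have h81 : (81 : ZMod p) ≠ 0 := x81_ne hp3
  simp only [F2]
  rw [show d - 2 = d + (-2) by ring, show d - 1 = d + (-1) by ring,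
    show (3 : ℤ) - (d + (-2)) = (3 - d) + 2 by ring,
    show (3 : ℤ) - (d + (-1)) = (3 - d) + 1 by ring,
    show (3 : ℤ) - (d + 1) = (3 - d) + (-1) by ring]
  simp only [zpow_add₀ h1, zpow_add₀ h2, zpow_add₀ h4, zpow_neg, zpow_one, zpow_two,
    zpow_ofNat]
  push_cast
  field_simp
  ring

section shifted
variable {p : ℕ} [Fact p.Prime] {N : ℕ}

lemma F1N (hp3 : 3 < p) (hN0 : ((N : ℕ) : ZMod p) = 0) (hNodd : Odd N)
    (hNv : ∀ x : ZMod p, x ^ N = x) (t : ℤ) :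
    F1 p ((N : ℤ) + t) = (-((-1 : ZMod p) ^ t) * (4 : ZMod p) ^ (2 - t) * (4 : ZMod p)⁻¹
      - 14 * ((9 * t + 1 : ℤ) : ZMod p) * (2 : ZMod p) ^ t) * (81 : ZMod p)⁻¹ := by
  have h1 : (-1 : ZMod p) ≠ 0 := neg_one_ne
  have h2 : (2 : ZMod p) ≠ 0 := two_ne hp3
  have h4 : (4 : ZMod p) ≠ 0 := four_ne hp3
  have e1 : (-1 : ZMod p) ^ ((N : ℤ) + t) = -(-1 : ZMod p) ^ t := by
    rw [zpow_add₀ h1, zpow_natCast, hNodd.neg_one_pow]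
    ring
  have e2 : (2 : ZMod p) ^ ((N : ℤ) + t) = 2 * (2 : ZMod p) ^ t := by
    rw [zpow_add₀ h2, zpow_natCast, hNv 2]
  have e4 : (4 : ZMod p) ^ ((2 : ℤ) - ((N : ℤ) + t)) = (4 : ZMod p) ^ (2 - t) * (4 : ZMod p)⁻¹ := by
    rw [show (2 : ℤ) - ((N : ℤ) + t) = (2 - t) + (-(N : ℤ)) by ring, zpow_add₀ h4, zpow_neg,
      zpow_natCast, hNv 4]
  have ec : ((9 * ((N : ℤ) + t) + 1 : ℤ) : ZMod p) = 9 * ((t : ℤ) : ZMod p) + 1 := by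
    push_cast [hN0]
    ring
  simp only [F1, e1, e2, e4, ec]
  push_cast
  ring

lemma F2N (hp3 : 3 < p) (hN0 : ((N : ℕ) : ZMod p) = 0) (hNodd : Odd N)
    (hNv : ∀ x : ZMod p, x ^ N = x) (t : ℤ) :
    F2 p ((N : ℤ) + t) = (-((-1 : ZMod p) ^ t) * (4 : ZMod p) ^ (3 - t) * (4 : ZMod p)⁻¹
      - 2 * ((9 * t + 1 : ℤ) : ZMod p) * (2 : ZMod p) ^ t) * (81 : ZMod p)⁻¹ := by
  have h1 : (-1 : ZMod p) ≠ 0 := neg_one_ne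
  have h2 : (2 : ZMod p) ≠ 0 := two_ne hp3
  have h4 : (4 : ZMod p) ≠ 0 := four_ne hp3
  have e1 : (-1 : ZMod p) ^ ((N : ℤ) + t) = -(-1 : ZMod p) ^ t := by
    rw [zpow_add₀ h1, zpow_natCast, hNodd.neg_one_pow]
    ring
  have e2 : (2 : ZMod p) ^ ((N : ℤ) + t) = 2 * (2 : ZMod p) ^ t := by
    rw [zpow_add₀ h2, zpow_natCast, hNv 2]
  have e4 : (4 : ZMod p) ^ ((3 : ℤ) - ((N : ℤ) + t)) = (4 : ZMod p) ^ (3 - t) * (4 : ZMod p)⁻¹ := by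
    rw [show (3 : ℤ) - ((N : ℤ) + t) = (3 - t) + (-(N : ℤ)) by ring, zpow_add₀ h4, zpow_neg,
      zpow_natCast, hNv 4]
  have ec : ((9 * ((N : ℤ) + t) + 1 : ℤ) : ZMod p) = 9 * ((t : ℤ) : ZMod p) + 1 := by
    push_cast [hN0]
    ring
  simp only [F2, e1, e2, e4, ec]
  push_cast
  ring

end shifted

section Rpart
variable {p : ℕ} [Fact p.Prime] {N : ℕ}

lemma RfF1 (e : ℤ) (he : e ≤ (N : ℤ)) : Rf p N e = F1 p e := if_pos he

lemma RfF2 (e : ℤ) (he : ¬ e ≤ (N : ℤ)) (he2 : e ≤ 2 * (N : ℤ)) : Rf p N e = F2 p e := by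
  rw [Rf, if_neg he, if_pos he2]

lemma Rf0 (e : ℤ) (he : ¬ e ≤ 2 * (N : ℤ)) : Rf p N e = 0 := by
  rw [Rf, if_neg (by omega), if_neg he]

lemma Rrec (hp3 : 3 < p) (hN0 : ((N : ℕ) : ZMod p) = 0) (hNodd : Odd N)
    (hNv : ∀ x : ZMod p, x ^ N = x) (hN5 : 5 ≤ N)
    (d : ℤ) (hd1 : 1 ≤ d) (hd2 : d ≤ 2 * (N : ℤ) - 1) :
    Rf p N (d - 2) = 27 * (4 : ZMod p)⁻¹ * Rf p N d + (if d = (N : ℤ) then 3 else 0)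
      - Rf p N (d + 1) - 3 * Rf p N d - 3 * Rf p N (d - 1) := by
  have h1 : (-1 : ZMod p) ≠ 0 := neg_one_ne
  have h2 : (2 : ZMod p) ≠ 0 := two_ne hp3
  have h3 : (3 : ZMod p) ≠ 0 := three_ne hp3
  have h4 : (4 : ZMod p) ≠ 0 := four_ne hp3
  have h81 : (81 : ZMod p) ≠ 0 := x81_ne hp3
  by_cases hA : d + 1 ≤ (N : ℤ)
  · rw [RfF1 (d - 2) (by omega), RfF1 d (by omega), RfF1 (d + 1) (by omega),
      RfF1 (d - 1) (by omega), if_neg (by omega : ¬ d = (N : ℤ))]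
    linear_combination F1hom hp3 d
  by_cases hB : d = (N : ℤ)
  · subst hB
    rw [RfF1 ((N : ℤ) - 2) (by omega), RfF1 (N : ℤ) le_rfl, RfF1 ((N : ℤ) - 1) (by omega),
      RfF2 ((N : ℤ) + 1) (by omega) (by omega), if_pos rfl]
    rw [show (N : ℤ) - 2 = (N : ℤ) + (-2) by ring, show (N : ℤ) - 1 = (N : ℤ) + (-1) by ring]
    rw [F1N hp3 hN0 hNodd hNv, F1N hp3 hN0 hNodd hNv, F2N hp3 hN0 hNodd hNv]
    have h0 : F1 p (N : ℤ) = F1 p ((N : ℤ) + 0) := by norm_num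
    rw [h0, F1N hp3 hN0 hNodd hNv]
    have hx : (136048896 : ZMod p) ≠ 0 := by
      rw [show (136048896 : ZMod p) = 2 ^ 8 * 3 ^ 12 by norm_num]
      exact mul_ne_zero (pow_ne_zero _ h2) (pow_ne_zero _ h3)
    simp only [zpow_neg, zpow_ofNat, zpow_zero, zpow_one]
    push_cast
    norm_num
    field_simp [hx]
    norm_num
  by_cases hC : d = (N : ℤ) + 1
  · subst hC
    rw [show (N : ℤ) + 1 - 2 = (N : ℤ) + (-1) by ring, show (N : ℤ) + 1 - 1 = (N : ℤ) + 0 by ring,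
      show (N : ℤ) + 1 + 1 = (N : ℤ) + 2 by ring]
    rw [RfF1 ((N : ℤ) + (-1)) (by omega), RfF1 ((N : ℤ) + 0) (by omega),
      RfF2 ((N : ℤ) + 1) (by omega) (by omega), RfF2 ((N : ℤ) + 2) (by omega) (by omega),
      if_neg (by omega : ¬ (N : ℤ) + 1 = (N : ℤ))]
    rw [F1N hp3 hN0 hNodd hNv, F1N hp3 hN0 hNodd hNv, F2N hp3 hN0 hNodd hNv,
      F2N hp3 hN0 hNodd hNv]
    have hx : (34012224 : ZMod p) ≠ 0 := by
      rw [show (34012224 : ZMod p) = 2 ^ 6 * 3 ^ 12 by norm_num]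
      exact mul_ne_zero (pow_ne_zero _ h2) (pow_ne_zero _ h3)
    simp only [zpow_neg, zpow_ofNat, zpow_zero, zpow_one]
    push_cast
    norm_num
    field_simp [hx]
    norm_num
  by_cases hD : d = (N : ℤ) + 2
  · subst hD
    rw [show (N : ℤ) + 2 - 2 = (N : ℤ) + 0 by ring, show (N : ℤ) + 2 - 1 = (N : ℤ) + 1 by ring,
      show (N : ℤ) + 2 + 1 = (N : ℤ) + 3 by ring]
    rw [RfF1 ((N : ℤ) + 0) (by omega), RfF2 ((N : ℤ) + 1) (by omega) (by omega),
      RfF2 ((N : ℤ) + 2) (by omega) (by omega), RfF2 ((N : ℤ) + 3) (by omega) (by omega),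
      if_neg (by omega : ¬ (N : ℤ) + 2 = (N : ℤ))]
    rw [F1N hp3 hN0 hNodd hNv, F2N hp3 hN0 hNodd hNv, F2N hp3 hN0 hNodd hNv,
      F2N hp3 hN0 hNodd hNv]
    simp only [zpow_neg, zpow_ofNat, zpow_zero, zpow_one]
    push_cast
    norm_num
    field_simp
    ring
  · rw [RfF2 (d - 2) (by omega) (by omega), RfF2 d (by omega) (by omega),
      RfF2 (d + 1) (by omega) (by omega), RfF2 (d - 1) (by omega) (by omega),
      if_neg (by omega : ¬ d = (N : ℤ))]
    linear_combination F2hom hp3 d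

end Rpart

section Base
variable {p : ℕ} [Fact p.Prime] {N : ℕ}

lemma F2NN (hp3 : 3 < p) (hN0 : ((N : ℕ) : ZMod p) = 0) (hNodd : Odd N)
    (hNv : ∀ x : ZMod p, x ^ N = x) (t : ℤ) :
    F2 p (2 * (N : ℤ) + t) = ((-1 : ZMod p) ^ t * (4 : ZMod p) ^ (3 - t) * (4 : ZMod p)⁻¹
      * (4 : ZMod p)⁻¹ - 4 * ((9 * t + 1 : ℤ) : ZMod p) * (2 : ZMod p) ^ t) * (81 : ZMod p)⁻¹ := by
  have h1 : (-1 : ZMod p) ≠ 0 := neg_one_ne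
  have h2 : (2 : ZMod p) ≠ 0 := two_ne hp3
  have h4 : (4 : ZMod p) ≠ 0 := four_ne hp3
  rw [show 2 * (N : ℤ) + t = (N : ℤ) + ((N : ℤ) + t) by ring, F2N hp3 hN0 hNodd hNv]
  have e1 : (-1 : ZMod p) ^ ((N : ℤ) + t) = -(-1 : ZMod p) ^ t := by
    rw [zpow_add₀ h1, zpow_natCast, hNodd.neg_one_pow]; ring
  have e2 : (2 : ZMod p) ^ ((N : ℤ) + t) = 2 * (2 : ZMod p) ^ t := by
    rw [zpow_add₀ h2, zpow_natCast, hNv 2]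
  have e4 : (4 : ZMod p) ^ ((3 : ℤ) - ((N : ℤ) + t)) = (4 : ZMod p) ^ (3 - t) * (4 : ZMod p)⁻¹ := by
    rw [show (3 : ℤ) - ((N : ℤ) + t) = (3 - t) + (-(N : ℤ)) by ring, zpow_add₀ h4, zpow_neg,
      zpow_natCast, hNv 4]
  have ec : ((9 * ((N : ℤ) + t) + 1 : ℤ) : ZMod p) = ((9 * t + 1 : ℤ) : ZMod p) := by
    push_cast [hN0]; ring
  rw [e1, e2, e4, ec]
  ring

lemma F1eqF2 (hp3 : 3 < p) (hN0 : ((N : ℕ) : ZMod p) = 0) (hNodd : Odd N)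
    (hNv : ∀ x : ZMod p, x ^ N = x) : F1 p (N : ℤ) = F2 p (N : ℤ) := by
  have h0 : ((N : ℤ)) = (N : ℤ) + 0 := by ring
  rw [h0, F1N hp3 hN0 hNodd hNv, F2N hp3 hN0 hNodd hNv]
  norm_num
  left
  rw [show (16 : ZMod p) = 4 * 4 by norm_num, show (64 : ZMod p) = 4 * 4 * 4 by norm_num,
    mul_inv_cancel_right₀ (four_ne hp3), mul_inv_cancel_right₀ (four_ne hp3)]
  norm_num

lemma Rf_base (hp3 : 3 < p) (hN0 : ((N : ℕ) : ZMod p) = 0) (hNodd : Odd N)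
    (hNv : ∀ x : ZMod p, x ^ N = x) (hN5 : 5 ≤ N) :
    Rf p N (2 * (N : ℤ) + 1) = 0 ∧ Rf p N (2 * (N : ℤ)) = 0 ∧ Rf p N (2 * (N : ℤ) - 1) = 0 ∧
      Rf p N (2 * (N : ℤ) - 2) = 1 := by
  have h2 : (2 : ZMod p) ≠ 0 := two_ne hp3
  have h3 : (3 : ZMod p) ≠ 0 := three_ne hp3
  have h4 : (4 : ZMod p) ≠ 0 := four_ne hp3
  have h81 : (81 : ZMod p) ≠ 0 := x81_ne hp3
  refine ⟨Rf0 _ (by omega), ?_, ?_, ?_⟩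
  · rw [RfF2 _ (by omega) (by omega), show 2 * (N : ℤ) = 2 * (N : ℤ) + 0 by ring,
      F2NN hp3 hN0 hNodd hNv]
    norm_num
    field_simp
    left
    norm_num
  · rw [RfF2 _ (by omega) (by omega), show 2 * (N : ℤ) - 1 = 2 * (N : ℤ) + (-1) by ring,
      F2NN hp3 hN0 hNodd hNv]
    simp only [zpow_neg, zpow_one]
    push_cast
    norm_num
    field_simp
    left
    norm_num
  · rw [RfF2 _ (by omega) (by omega), show 2 * (N : ℤ) - 2 = 2 * (N : ℤ) + (-2) by ring,
      F2NN hp3 hN0 hNodd hNv]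
    simp only [zpow_neg, zpow_ofNat]
    push_cast
    norm_num
    field_simp
    ring

end Base

lemma Sf_eq_Rf {p : ℕ} [Fact p.Prime] (hp3 : 3 < p) {N : ℕ} (hN0 : ((N : ℕ) : ZMod p) = 0)
    (hNodd : Odd N) (hNv : ∀ x : ZMod p, x ^ N = x) (hN5 : 5 ≤ N)
    (hLuc : ∀ m : ℕ, (((3 * N).choose m : ℕ) : ZMod p) =
      if N ∣ m then ((Nat.choose 3 (m / N) : ℕ) : ZMod p) else 0) :
    ∀ n : ℕ, ∀ d : ℤ, d = 2 * (N : ℤ) + 1 - n → -1 ≤ d → Sf p N d = Rf p N d := by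
  intro n
  induction n using Nat.strong_induction_on with
  | _ n ih =>
    intro d hdn hdm
    have h4 : (4 : ZMod p) ≠ 0 := four_ne hp3
    have h27 : (27 : ZMod p) ≠ 0 := x27_ne hp3
    have hcne : (4 * (27 : ZMod p)⁻¹) ≠ 0 := mul_ne_zero h4 (inv_ne_zero h27)
    obtain ⟨b1, b2, b3, b4⟩ := Rf_base hp3 hN0 hNodd hNv hN5
    by_cases hbig : 2 * (N : ℤ) - 2 ≤ d
    · have hcases : d = 2 * (N : ℤ) - 2 ∨ d = 2 * (N : ℤ) - 1 ∨ d = 2 * (N : ℤ)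
          ∨ d = 2 * (N : ℤ) + 1 := by omega
      rcases hcases with h | h | h | h <;> subst h
      · rw [Sf_last (by omega) (hNv _) hcne, b4]
      · rw [Sf_zero (by omega), b3]
      · rw [Sf_zero (by omega), b2]
      · rw [Sf_zero (by omega), b1]
    · have ih1 : Sf p N (d + 1) = Rf p N (d + 1) := ih (n - 1) (by omega) _ (by omega) (by omega)
      have ih2 : Sf p N (d + 2) = Rf p N (d + 2) := ih (n - 2) (by omega) _ (by omega) (by omega)
      have ih3 : Sf p N (d + 3) = Rf p N (d + 3) := ih (n - 3) (by omega) _ (by omega) (by omega)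
      have hs := Srec hN5 (hNv _) hcne h4 h27 hLuc (d + 2) (by omega) (by omega)
      have hr := Rrec hp3 hN0 hNodd hNv hN5 (d + 2) (by omega) (by omega)
      rw [show d + 2 - 2 = d by ring, show d + 2 + 1 = d + 3 by ring,
        show d + 2 - 1 = d + 1 by ring] at hs hr
      rw [hs, hr, ih1, ih2, ih3]

theorem stmt_16 (p : ℕ) [Fact p.Prime] (hp3 : 3 < p) (a : ℕ) (ha : 0 < a) (d : ℤ) :
    (-1 ≤ d → d ≤ (p : ℤ) ^ a →
      (∑ k ∈ Finset.range (p ^ a),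
          (4 : ZMod p) ^ k * ((27 : ZMod p) ^ k)⁻¹ * (ibinom (3 * k) ((k : ℤ) + d) : ZMod p)) =
        ((-1 : ZMod p) ^ d * (4 : ZMod p) ^ (2 - d) -
            7 * ((9 * d + 1 : ℤ) : ZMod p) * (2 : ZMod p) ^ d) * (81 : ZMod p)⁻¹) ∧
    ((p : ℤ) ^ a ≤ d → d ≤ 2 * (p : ℤ) ^ a →
      (∑ k ∈ Finset.range (p ^ a),
          (4 : ZMod p) ^ k * ((27 : ZMod p) ^ k)⁻¹ * (ibinom (3 * k) ((k : ℤ) + d) : ZMod p)) =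
        ((-1 : ZMod p) ^ d * (4 : ZMod p) ^ (3 - d) -
            ((9 * d + 1 : ℤ) : ZMod p) * (2 : ZMod p) ^ d) * (81 : ZMod p)⁻¹) := by
  have hp : p.Prime := Fact.out
  have hp5 : 5 ≤ p := by
    have h4 : p ≠ 4 := by
      intro h
      rw [h] at hp
      norm_num at hp
    omega
  set N := p ^ a with hNdef
  have hN5 : 5 ≤ N := le_trans hp5 (Nat.le_self_pow ha.ne' p)
  have hN0 : ((N : ℕ) : ZMod p) = 0 := by
    rw [hNdef]
    push_cast
    rw [ZMod.natCast_self]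
    exact zero_pow ha.ne'
  have hNodd : Odd N := (hp.odd_of_ne_two (by omega)).pow
  have hNv : ∀ x : ZMod p, x ^ N = x := fun x => ZMod.pow_card_pow x
  have hLuc : ∀ m : ℕ, (((3 * N).choose m : ℕ) : ZMod p) =
      if N ∣ m then ((Nat.choose 3 (m / N) : ℕ) : ZMod p) else 0 := fun m => lucas3 p a m
  have hNZ : ((N : ℕ) : ℤ) = (p : ℤ) ^ a := by rw [hNdef]; push_cast; ring
  have hsum : (∑ k ∈ Finset.range N,
      (4 : ZMod p) ^ k * ((27 : ZMod p) ^ k)⁻¹ * (ibinom (3 * k) ((k : ℤ) + d) : ZMod p))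
      = Sf p N d := by
    apply Finset.sum_congr rfl
    intro k _
    rw [mul_pow, inv_pow]
  have main : ∀ e : ℤ, -1 ≤ e → e ≤ 2 * (N : ℤ) + 1 → Sf p N e = Rf p N e := by
    intro e h1 h2
    exact Sf_eq_Rf hp3 hN0 hNodd hNv hN5 hLuc (2 * (N : ℤ) + 1 - e).toNat e (by omega) h1
  constructor
  · intro hd1 hd2
    rw [← hNZ] at hd2
    rw [hsum, main d hd1 (by omega), RfF1 d (by omega)]
    rfl
  · intro hd1 hd2
    rw [← hNZ] at hd1 hd2
    rw [hsum, main d (by omega) (by omega)]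
    by_cases h : d = (N : ℤ)
    · rw [RfF1 d (le_of_eq h), h, F1eqF2 hp3 hN0 hNodd hNv]
      rfl
    · rw [RfF2 d (by omega) (by omega)]
      rfl
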